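/- arXiv:2311.08208 — 2 statements merged into one kernel-verified Lean document; each statement's English description precedes it below -/
import Mathlib

section
/- Let g be a finite-dimensional Lie algebra over a field k, let h ⊆ g be a nilpotent self-normalising subalgebra (a Cartan subalgebra), and let A = k[t]/(t^{m+1}). Then h ⊗ A is a nilpotent self-normalising subalgebra of g ⊗ A, i.e. h ⊗ A is a Cartan subalgebra of the truncated current Lie algebra. -/
open TensorProduct Polynomial

section

variable (k : Type*) [Field k] (g : Type*) [LieRing g] [LieAlgebra k g] (m : ℕ)

local notation "A" => AdjoinRoot ((X : Polynomial k) ^ (m + 1))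

/-- The truncated current Lie algebra `g ⊗ k[t]/(t^{m+1})` is a Lie algebra over `k`
(by restriction of scalars from `A = k[t]/(t^{m+1})`). -/
noncomputable instance : LieAlgebra k (A ⊗[k] g) where
  lie_smul c x y := by
    rw [← algebraMap_smul A c y, lie_smul, algebraMap_smul]

end

namespace TruncAux

variable {k : Type*} [Field k] {g : Type*} [LieRing g] [LieAlgebra k g]
variable {S : Type*} [CommRing S] [Algebra k S]

noncomputable instance (priority := 100) instLieAlgK : LieAlgebra k (S ⊗[k] g) where
  lie_smul c x y := by
    rw [← algebraMap_smul S c y, lie_smul, algebraMap_smul]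

variable {ι : Type*} [Fintype ι] (b : Module.Basis ι k S)

noncomputable def phi (i : ι) : S ⊗[k] g →ₗ[k] g :=
  (TensorProduct.lid k g).toLinearMap ∘ₗ LinearMap.rTensor g (b.coord i)

@[simp] lemma phi_tmul (i : ι) (a : S) (y : g) :
    phi b i (a ⊗ₜ[k] y) = b.repr a i • y := by
  simp [phi, Module.Basis.coord_apply]

lemma sum_phi (x : S ⊗[k] g) : ∑ i, b i ⊗ₜ[k] phi b i x = x := by
  induction x using TensorProduct.induction_on with
  | zero => simp
  | tmul a y =>
    calc ∑ i, b i ⊗ₜ[k] phi b i (a ⊗ₜ[k] y)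
        = ∑ i, (b.repr a i • b i) ⊗ₜ[k] y := by
          refine Finset.sum_congr rfl fun i _ => ?_
          rw [phi_tmul, TensorProduct.smul_tmul]
      _ = a ⊗ₜ[k] y := by rw [← TensorProduct.sum_tmul, b.sum_repr]
  | add u v hu hv =>
    simp only [map_add, TensorProduct.tmul_add, Finset.sum_add_distrib, hu, hv]

/-- The `S`-submodule of elements all of whose components lie in `p`. -/
noncomputable def comps (p : Submodule k g) : Submodule S (S ⊗[k] g) where
  carrier := {x | ∀ i, phi b i x ∈ p}
  add_mem' := fun hx hy i => by rw [map_add]; exact p.add_mem (hx i) (hy i)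
  zero_mem' := fun i => by rw [map_zero]; exact p.zero_mem
  smul_mem' := fun a x hx i => by
    rw [show x = ∑ j, b j ⊗ₜ[k] phi b j x from (sum_phi b x).symm]
    rw [Finset.smul_sum, map_sum]
    refine p.sum_mem fun j _ => ?_
    rw [TensorProduct.smul_tmul', phi_tmul]
    exact p.smul_mem _ (hx j)

lemma mem_baseChange_iff (p : Submodule k g) {x : S ⊗[k] g} :
    x ∈ p.baseChange S ↔ ∀ i, phi b i x ∈ p := by
  constructor
  · intro hx
    have hle : p.baseChange S ≤ comps b p := by
      rw [Submodule.baseChange_eq_span, Submodule.span_le]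
      rintro _ ⟨m, hm, rfl⟩
      exact fun i => by simpa using p.smul_mem (b.repr 1 i) hm
    exact hle hx
  · intro h
    rw [← sum_phi b x]
    exact Submodule.sum_mem _ fun i _ => Submodule.tmul_mem_baseChange_of_mem _ (h i)

lemma phi_lie (i : ι) (x : S ⊗[k] g) (y : g) :
    phi b i ⁅x, (1:S) ⊗ₜ[k] y⁆ = ⁅phi b i x, y⁆ := by
  induction x using TensorProduct.induction_on with
  | zero => simp
  | tmul a z => simp [smul_lie]
  | add u v hu hv => simp only [add_lie, map_add, hu, hv]

lemma lie_mem_baseChange (H : LieSubalgebra k g) {x y : S ⊗[k] g}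
    (hx : x ∈ (H : Submodule k g).baseChange S)
    (hy : y ∈ (H : Submodule k g).baseChange S) :
    ⁅x, y⁆ ∈ (H : Submodule k g).baseChange S := by
  have hx' : x ∈ Submodule.span S ((H : Submodule k g).map (TensorProduct.mk k S g 1)) := by
    rw [← Submodule.baseChange_eq_span]; exact hx
  have hy' : y ∈ Submodule.span S ((H : Submodule k g).map (TensorProduct.mk k S g 1)) := by
    rw [← Submodule.baseChange_eq_span]; exact hy
  clear hx hy
  induction hx' using Submodule.span_induction with
  | mem x hx =>
    obtain ⟨h1, hh1, rfl⟩ := hx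
    induction hy' using Submodule.span_induction with
    | mem y hy =>
      obtain ⟨h2, hh2, rfl⟩ := hy
      have : ⁅(TensorProduct.mk k S g 1) h1, (TensorProduct.mk k S g 1) h2⁆
          = ((1:S)*1) ⊗ₜ[k] ⁅h1, h2⁆ := rfl
      rw [this, one_mul]
      exact Submodule.tmul_mem_baseChange_of_mem _ (H.lie_mem hh1 hh2)
    | zero => rw [lie_zero]; exact Submodule.zero_mem _
    | add y z _ _ ihy ihz => rw [lie_add]; exact Submodule.add_mem _ ihy ihz
    | smul a y _ ih => rw [lie_smul]; exact Submodule.smul_mem _ a ih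
  | zero => rw [zero_lie]; exact Submodule.zero_mem _
  | add u v _ _ ihu ihv => rw [add_lie]; exact Submodule.add_mem _ ihu ihv
  | smul a u _ ih => rw [smul_lie]; exact Submodule.smul_mem _ a ih

variable (H : LieSubalgebra k g)

noncomputable def jmap : S ⊗[k] H →ₗ[k] S ⊗[k] g :=
  LinearMap.lTensor S (H.incl.toLinearMap)

@[simp] lemma jmap_tmul (a : S) (h : H) :
    (jmap H : S ⊗[k] H →ₗ[k] S ⊗[k] g) (a ⊗ₜ[k] h) = a ⊗ₜ[k] (h : g) := by
  simp [jmap]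

lemma jmap_mem (x : S ⊗[k] H) :
    (jmap H : S ⊗[k] H →ₗ[k] S ⊗[k] g) x ∈ (H : Submodule k g).baseChange S := by
  induction x using TensorProduct.induction_on with
  | zero => rw [map_zero]; exact Submodule.zero_mem _
  | tmul a h => rw [jmap_tmul]; exact Submodule.tmul_mem_baseChange_of_mem _ h.2
  | add u v hu hv => rw [map_add]; exact Submodule.add_mem _ hu hv

lemma jmap_lie (x y : S ⊗[k] H) :
    (jmap H : S ⊗[k] H →ₗ[k] S ⊗[k] g) ⁅x, y⁆ = ⁅jmap H x, jmap H y⁆ := by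
  induction x using TensorProduct.induction_on with
  | zero =>
    have e : ⁅(0 : S ⊗[k] H), y⁆ = 0 := zero_lie y
    rw [e, map_zero]
    exact (zero_lie ((jmap H) y)).symm
  | tmul a h1 =>
    induction y using TensorProduct.induction_on with
    | zero =>
      have e : ⁅a ⊗ₜ[k] h1, (0 : S ⊗[k] H)⁆ = 0 := lie_zero (a ⊗ₜ[k] h1)
      rw [e, map_zero]
      exact (lie_zero ((jmap H) (a ⊗ₜ[k] h1))).symm
    | tmul c h2 => simp
    | add u v hu hv =>
      have e : ⁅a ⊗ₜ[k] h1, u + v⁆ = ⁅a ⊗ₜ[k] h1, u⁆ + ⁅a ⊗ₜ[k] h1, v⁆ := lie_add (a ⊗ₜ[k] h1) u v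
      rw [e, map_add, map_add, hu, hv]
      exact (lie_add ((jmap H) (a ⊗ₜ[k] h1)) ((jmap H) u) ((jmap H) v)).symm
  | add u v hu hv =>
    have e : ⁅u + v, y⁆ = ⁅u, y⁆ + ⁅v, y⁆ := add_lie u v y
    rw [e, map_add, map_add, hu, hv]
    exact (add_lie ((jmap H) u) ((jmap H) v) ((jmap H) y)).symm

lemma jmap_surj (b : Module.Basis ι k S) {z : S ⊗[k] g} (hz : z ∈ (H : Submodule k g).baseChange S) :
    ∃ x : S ⊗[k] H, jmap H x = z := by
  rw [mem_baseChange_iff b] at hz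
  refine ⟨∑ i, b i ⊗ₜ[k] (⟨phi b i z, hz i⟩ : H), ?_⟩
  rw [map_sum]
  simp only [jmap_tmul]
  exact sum_phi b z

/-- Restriction of scalars of a Lie submodule. -/
def restrictLieSub {L : Type*} [LieRing L] [LieAlgebra S L] [LieAlgebra k L]
    [IsScalarTower k S L] (N : LieSubmodule S L L) : LieSubmodule k L L :=
  { N.toSubmodule.restrictScalars k with
    lie_mem := fun {x m} hm => N.lie_mem hm }

open LieModule in
lemma isNilpotent_k_of_S (L : Type*) [LieRing L] [LieAlgebra S L] [LieAlgebra k L]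
    [IsScalarTower k S L] [LieRing.IsNilpotent L] : LieRing.IsNilpotent L := by
  infer_instance

end TruncAux

section

variable (k : Type*) [Field k] (g : Type*) [LieRing g] [LieAlgebra k g] (m : ℕ)

local notation "A" => AdjoinRoot ((X : Polynomial k) ^ (m + 1))

/-- If `h ⊆ g` is a Cartan subalgebra (nilpotent and self-normalising) then
`h ⊗ A` is a Cartan subalgebra of the truncated current Lie algebra `g ⊗ A`,
`A = k[t]/(t^{m+1})`. -/
theorem cartan_subalgebra_of_truncated_currents
    [FiniteDimensional k g] (H : LieSubalgebra k g) (hH : H.IsCartanSubalgebra) :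
    ∃ H' : LieSubalgebra k (A ⊗[k] g),
      H'.toSubmodule = (Submodule.baseChange A H.toSubmodule).restrictScalars k ∧
      H'.IsCartanSubalgebra := by
  classical
  have hne : ((X : Polynomial k) ^ (m + 1)) ≠ 0 := pow_ne_zero _ Polynomial.X_ne_zero
  set pb := AdjoinRoot.powerBasis hne with hpb
  set b : Module.Basis (Fin pb.dim) k A := pb.basis with hb
  refine ⟨{ (Submodule.baseChange A H.toSubmodule).restrictScalars k with
            lie_mem' := fun {x y} hx hy => TruncAux.lie_mem_baseChange H hx hy }, rfl, ?_, ?_⟩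
  · -- nilpotency
    haveI hnilH : LieRing.IsNilpotent H := hH.nilpotent
    haveI h2 : LieRing.IsNilpotent (A ⊗[k] ↥H) :=
      TruncAux.isNilpotent_k_of_S (k := k) (S := A) (A ⊗[k] ↥H)
    set H' : LieSubalgebra k (A ⊗[k] g) :=
      { (Submodule.baseChange A H.toSubmodule).restrictScalars k with
        lie_mem' := fun {x y} hx hy => TruncAux.lie_mem_baseChange H hx hy } with hH'
    let F : (A ⊗[k] ↥H) →ₗ⁅k⁆ ↥H' :=
      { toFun := fun x => ⟨TruncAux.jmap H x, TruncAux.jmap_mem H x⟩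
        map_add' := fun x y => Subtype.ext (map_add _ x y)
        map_smul' := fun c x => Subtype.ext (map_smul _ c x)
        map_lie' := fun {x y} => Subtype.ext (TruncAux.jmap_lie H x y) }
    have hs : Function.Surjective F := by
      rintro ⟨z, hz⟩
      obtain ⟨x, hx⟩ := TruncAux.jmap_surj H b
        (show z ∈ Submodule.baseChange A H.toSubmodule from hz)
      exact ⟨x, Subtype.ext hx⟩
    exact hs.lieAlgebra_isNilpotent
  · -- self-normalizing
    set H' : LieSubalgebra k (A ⊗[k] g) :=
      { (Submodule.baseChange A H.toSubmodule).restrictScalars k with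
        lie_mem' := fun {x y} hx hy => TruncAux.lie_mem_baseChange H hx hy } with hH'
    refine le_antisymm ?_ H'.le_normalizer
    intro x hx
    rw [LieSubalgebra.mem_normalizer_iff] at hx
    have key : ∀ i, TruncAux.phi b i x ∈ H.toSubmodule := by
      intro i
      have hn : TruncAux.phi b i x ∈ H.normalizer := by
        rw [LieSubalgebra.mem_normalizer_iff]
        intro y hy
        have h2 := hx ((1:A) ⊗ₜ[k] y)
          (show ((1:A) ⊗ₜ[k] y) ∈ H' from Submodule.tmul_mem_baseChange_of_mem (1:A) hy)
        have h3 := (TruncAux.mem_baseChange_iff b H.toSubmodule).1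
          (show ⁅x, (1:A) ⊗ₜ[k] y⁆ ∈ Submodule.baseChange A H.toSubmodule from h2) i
        have h4 : TruncAux.phi b i ⁅x, (1:A) ⊗ₜ[k] y⁆ = ⁅TruncAux.phi b i x, y⁆ :=
          TruncAux.phi_lie b i x y
        rw [← h4]
        exact h3
      rwa [hH.self_normalizing] at hn
    exact (TruncAux.mem_baseChange_iff b H.toSubmodule).2 key

end
end

section
/- Let k be an algebraically closed field of characteristic p > 2, let g = sl_2(k), m ≥ 0, and let x = Σ_{j=i}^m x_j t^j ∈ g ⊗ k[t]/(t^{m+1}) with all x_j ∈ sl_2(k) nilpotent matrices and x_i ≠ 0. Then the centraliser of x in the truncated current Lie algebra (sl_2)_m has dimension at least 2i + m + 1. -/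
open Polynomial

namespace SL2Aux

variable (k : Type*) [Field k] (m : ℕ)

noncomputable def bA :
    Module.Basis (Fin (m+1)) k (AdjoinRoot ((X : Polynomial k) ^ (m+1))) :=
  (AdjoinRoot.powerBasis' (monic_X_pow (m+1))).basis.reindex
    (finCongr (by simp))

variable {k m}

lemma bA_apply (e : Fin (m+1)) :
    bA k m e = (AdjoinRoot.root ((X : Polynomial k) ^ (m+1))) ^ (e : ℕ) := by
  simp only [bA, Module.Basis.reindex_apply]
  rw [PowerBasis.basis_eq_pow, AdjoinRoot.powerBasis'_gen]
  congr 1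
lemma root_pow_high {d : ℕ} (hd : m < d) :
    (AdjoinRoot.root ((X : Polynomial k) ^ (m+1))) ^ d = 0 := by
  have h1 : (AdjoinRoot.root ((X : Polynomial k) ^ (m+1))) ^ (m+1) = 0 := by
    rw [← AdjoinRoot.mk_X, ← map_pow, AdjoinRoot.mk_self]
  calc (AdjoinRoot.root ((X : Polynomial k) ^ (m+1))) ^ d
      = (AdjoinRoot.root ((X : Polynomial k) ^ (m+1))) ^ (m+1) *
        (AdjoinRoot.root ((X : Polynomial k) ^ (m+1))) ^ (d - (m+1)) := by
        rw [← pow_add]; congr 1; omega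
    _ = 0 := by rw [h1, zero_mul]

lemma coord_tpow (e : Fin (m+1)) (d : ℕ) :
    (bA k m).coord e ((AdjoinRoot.root ((X : Polynomial k) ^ (m+1))) ^ d) =
      if d = (e : ℕ) then 1 else 0 := by
  rcases le_or_gt d m with hd | hd
  · have : (AdjoinRoot.root ((X : Polynomial k) ^ (m+1))) ^ d = bA k m ⟨d, by omega⟩ := by
      rw [bA_apply]
    rw [this, Module.Basis.coord_apply, Module.Basis.repr_self, Finsupp.single_apply]
    simp [Fin.ext_iff, eq_comm]
  · rw [root_pow_high hd, map_zero]
    have : d ≠ (e : ℕ) := by omega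
    simp [this]



variable (k m) in
noncomputable def phi (r s : Fin 2) (e : Fin (m+1)) :
    Matrix (Fin 2) (Fin 2) (AdjoinRoot ((X : Polynomial k) ^ (m+1))) →ₗ[k] k :=
  (bA k m).coord e ∘ₗ
    ((Matrix.entryLinearMap (AdjoinRoot ((X : Polynomial k) ^ (m+1)))
      (AdjoinRoot ((X : Polynomial k) ^ (m+1))) r s).restrictScalars k)

lemma phi_tpow_smul (r s : Fin 2) (e : Fin (m+1)) (d : ℕ)
    (M : Matrix (Fin 2) (Fin 2) k) :
    phi k m r s e ((AdjoinRoot.root ((X : Polynomial k) ^ (m+1)) ^ d) •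
        M.map (algebraMap k (AdjoinRoot ((X : Polynomial k) ^ (m+1))))) =
      if d = (e : ℕ) then M r s else 0 := by
  have h1 : AdjoinRoot.root ((X : Polynomial k) ^ (m+1)) ^ d • (M.map (algebraMap k (AdjoinRoot ((X : Polynomial k) ^ (m+1)))) r s)
      = M r s • AdjoinRoot.root ((X : Polynomial k) ^ (m+1)) ^ d := by
    simp [Matrix.map_apply, Algebra.smul_def, smul_eq_mul, mul_comm]
  simp only [phi, LinearMap.coe_comp, Function.comp_apply, LinearMap.coe_restrictScalars,
    Matrix.entryLinearMap_apply, Matrix.smul_apply, h1, map_smul, smul_eq_mul]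
  rw [coord_tpow]
  split <;> simp


section Main

variable {k : Type*} [Field k] {m i : ℕ}

-- abbreviation-style local defs via plain defs
variable (k m) in
noncomputable def tA : AdjoinRoot ((X : Polynomial k) ^ (m+1)) := AdjoinRoot.root _

variable (k m i) in
noncomputable def uEl (x : Fin (m + 1) → Matrix (Fin 2) (Fin 2) k) (c : ℕ) :
    Matrix (Fin 2) (Fin 2) (AdjoinRoot ((X : Polynomial k) ^ (m+1))) :=
  ∑ j : Fin (m+1), (tA k m) ^ ((j : ℕ) - i + c) •
    (x j).map (algebraMap k (AdjoinRoot ((X : Polynomial k) ^ (m+1))))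

lemma hmul (d e : ℕ) (M N : Matrix (Fin 2) (Fin 2) k) :
    ((tA k m) ^ d • M.map (algebraMap k (AdjoinRoot ((X : Polynomial k) ^ (m+1))))) *
      ((tA k m) ^ e • N.map (algebraMap k (AdjoinRoot ((X : Polynomial k) ^ (m+1))))) =
    (tA k m) ^ (d + e) • (M * N).map (algebraMap k (AdjoinRoot ((X : Polynomial k) ^ (m+1)))) := by
  rw [Matrix.smul_mul, Matrix.mul_smul, smul_smul, ← pow_add,
    Matrix.map_mul]

lemma trace_tpow_smul (d : ℕ) (M : Matrix (Fin 2) (Fin 2) k) (hM : Matrix.trace M = 0) :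
    Matrix.trace ((tA k m) ^ d • M.map (algebraMap k (AdjoinRoot ((X : Polynomial k) ^ (m+1))))) = 0 := by
  rw [Matrix.trace_smul]
  have : Matrix.trace (M.map (algebraMap k (AdjoinRoot ((X : Polynomial k) ^ (m+1))))) =
      algebraMap k (AdjoinRoot ((X : Polynomial k) ^ (m+1))) (Matrix.trace M) := by
    simp [Matrix.trace, Matrix.diag, Matrix.map_apply, map_sum]
  rw [this, hM, map_zero, smul_zero]

lemma phi_tpow_smul_t (r s : Fin 2) (e : Fin (m+1)) (d : ℕ) (M : Matrix (Fin 2) (Fin 2) k) :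
    phi k m r s e ((tA k m) ^ d • M.map (algebraMap k (AdjoinRoot ((X : Polynomial k) ^ (m+1))))) =
      if d = (e : ℕ) then M r s else 0 := phi_tpow_smul r s e d M

variable (k m i) in
noncomputable def Xel (x : Fin (m + 1) → Matrix (Fin 2) (Fin 2) k) :
    Matrix (Fin 2) (Fin 2) (AdjoinRoot ((X : Polynomial k) ^ (m+1))) :=
  ∑ j : Fin (m+1), (tA k m) ^ (j : ℕ) •
    (x j).map (algebraMap k (AdjoinRoot ((X : Polynomial k) ^ (m+1))))

lemma comm_high (x : Fin (m + 1) → Matrix (Fin 2) (Fin 2) k)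
    (hlow : ∀ j : Fin (m + 1), (j : ℕ) < i → x j = 0)
    (M : Matrix (Fin 2) (Fin 2) k) (e : ℕ) (he : m < i + e) :
    Xel k m x * ((tA k m) ^ e • M.map (algebraMap k (AdjoinRoot ((X : Polynomial k) ^ (m+1))))) =
    ((tA k m) ^ e • M.map (algebraMap k (AdjoinRoot ((X : Polynomial k) ^ (m+1))))) *
      Xel k m x := by
  have hz : ∀ (j : Fin (m+1)) (N : Matrix (Fin 2) (Fin 2) k) (d : ℕ),
      ((j : ℕ) < i → N = 0) → ((i : ℕ) ≤ j → m < d) →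
      (tA k m) ^ d • N.map (algebraMap k (AdjoinRoot ((X : Polynomial k) ^ (m+1)))) = 0 := by
    intro j N d h1 h2
    rcases lt_or_ge (j : ℕ) i with hj | hj
    · rw [h1 hj]; simp
    · rw [show (tA k m) ^ d = 0 from root_pow_high (h2 hj)]; simp
  rw [Xel, Finset.sum_mul, Finset.mul_sum]
  refine Finset.sum_congr rfl fun j _ => ?_
  rw [hmul, hmul]
  rcases lt_or_ge (j : ℕ) i with hj | hj
  · rw [hlow j hj]; simp
  · rw [show (tA k m) ^ ((j:ℕ) + e) = 0 from root_pow_high (by omega),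
      show (tA k m) ^ (e + (j:ℕ)) = 0 from root_pow_high (by omega)]
    simp

lemma comm_u (htwo : (2 : k) ≠ 0) (x : Fin (m + 1) → Matrix (Fin 2) (Fin 2) k)
    (hlow : ∀ j : Fin (m + 1), (j : ℕ) < i → x j = 0) (c : ℕ) :
    Xel k m x * uEl k m i x c = uEl k m i x c * Xel k m x := by
  set A := AdjoinRoot ((X : Polynomial k) ^ (m+1))
  set al := algebraMap k A
  set F : Fin (m+1) → Fin (m+1) → Matrix (Fin 2) (Fin 2) A := fun j j' =>
    (tA k m) ^ ((j : ℕ) + ((j' : ℕ) - i + c)) • (x j * x j' - x j' * x j).map al with hF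
  have hanti : ∀ j j', F j j' = - F j' j := by
    intro j j'
    rcases lt_or_ge (j : ℕ) i with hj | hj
    · rw [hF]; simp only; rw [hlow j hj]; simp
    rcases lt_or_ge (j' : ℕ) i with hj' | hj'
    · rw [hF]; simp only; rw [hlow j' hj']; simp
    · rw [hF]; simp only
      rw [show (j : ℕ) + ((j' : ℕ) - i + c) = (j' : ℕ) + ((j : ℕ) - i + c) by omega,
        ← neg_sub (x j' * x j) (x j * x j'), ← RingHom.mapMatrix_apply, map_neg, smul_neg,
        RingHom.mapMatrix_apply]
  have hsplit : Xel k m x * uEl k m i x c - uEl k m i x c * Xel k m x =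
      ∑ j : Fin (m+1), ∑ j' : Fin (m+1), F j j' := by
    rw [Xel, uEl, Finset.sum_mul_sum, Finset.sum_mul_sum]
    have h1 : ∀ j j' : Fin (m+1), F j j' =
        (tA k m) ^ ((j : ℕ) + ((j' : ℕ) - i + c)) • (x j * x j').map al -
        (tA k m) ^ ((j' : ℕ) - i + c + (j : ℕ)) • (x j' * x j).map al := by
      intro j j'
      rw [hF]; simp only
      rw [← RingHom.mapMatrix_apply, map_sub, smul_sub, add_comm ((j' : ℕ) - i + c) (j : ℕ),
        RingHom.mapMatrix_apply, RingHom.mapMatrix_apply]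
    simp only [hmul, h1, Finset.sum_sub_distrib]
    congr 1
    exact Finset.sum_comm
  have hself : (∑ j : Fin (m+1), ∑ j' : Fin (m+1), F j j') =
      -(∑ j : Fin (m+1), ∑ j' : Fin (m+1), F j j') := by
    conv_lhs => rw [Finset.sum_comm]
    rw [← Finset.sum_neg_distrib]
    refine Finset.sum_congr rfl fun a _ => ?_
    rw [← Finset.sum_neg_distrib]
    exact Finset.sum_congr rfl fun b _ => hanti b a
  have hzero : (∑ j : Fin (m+1), ∑ j' : Fin (m+1), F j j') = 0 := by
    have h2 : (2 : k) • (∑ j : Fin (m+1), ∑ j' : Fin (m+1), F j j') = 0 := by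
      rw [two_smul]
      nth_rewrite 2 [hself]
      exact add_neg_cancel _
    rcases smul_eq_zero.mp h2 with h | h
    · exact absurd h htwo
    · exact h
  exact sub_eq_zero.mp (hsplit.trans hzero)

lemma heval_u_low (x : Fin (m + 1) → Matrix (Fin 2) (Fin 2) k)
    (hlow : ∀ j : Fin (m + 1), (j : ℕ) < i → x j = 0)
    (r s : Fin 2) (e : Fin (m+1)) (he : (e : ℕ) ≤ m - i) (c : ℕ) (hc : c ≤ (e : ℕ))
    (j0 : Fin (m+1)) (hj0 : (j0 : ℕ) = i + (e : ℕ) - c) :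
    phi k m r s e (uEl k m i x c) = x j0 r s := by
  have hij0 : i ≤ (j0 : ℕ) := by omega
  rw [uEl, map_sum]
  rw [show (∑ j : Fin (m+1), phi k m r s e
      ((tA k m) ^ ((j : ℕ) - i + c) • (x j).map (algebraMap k _))) =
      ∑ j : Fin (m+1), if (j : ℕ) - i + c = (e : ℕ) then x j r s else 0 from
    Finset.sum_congr rfl fun j _ => phi_tpow_smul_t r s e _ _]
  rw [Finset.sum_eq_single j0]
  · rw [if_pos (by omega)]
  · intro j _ hj
    by_cases hcond : (j : ℕ) - i + c = (e : ℕ)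
    · rcases lt_or_ge (j : ℕ) i with hji | hji
      · rw [if_pos hcond, hlow j hji]; simp
      · exact absurd (Fin.ext (by omega)) hj
    · rw [if_neg hcond]
  · intro h; exact absurd (Finset.mem_univ _) h

lemma heval_u_high (x : Fin (m + 1) → Matrix (Fin 2) (Fin 2) k)
    (hlow : ∀ j : Fin (m + 1), (j : ℕ) < i → x j = 0)
    (r s : Fin 2) (e : Fin (m+1)) (c : ℕ) (hc : (e : ℕ) < c) :
    phi k m r s e (uEl k m i x c) = 0 := by
  rw [uEl, map_sum]
  refine Finset.sum_eq_zero fun j _ => ?_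
  rw [phi_tpow_smul_t]
  by_cases hcond : (j : ℕ) - i + c = (e : ℕ)
  · rw [if_pos hcond, hlow j (by omega)]; simp
  · rw [if_neg hcond]

theorem main (p : ℕ) (hp : p.Prime) (hp2 : 2 < p) (k : Type*) [Field k] [CharP k p]
    (m i : ℕ) (hi : i ≤ m)
    (x : Fin (m + 1) → Matrix (Fin 2) (Fin 2) k)
    (hnil : ∀ j, IsNilpotent (x j))
    (hlow : ∀ j : Fin (m + 1), (j : ℕ) < i → x j = 0)
    (hxi : x ⟨i, Nat.lt_succ_of_le hi⟩ ≠ 0) :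
    2 * i + m + 1 ≤ Module.finrank k
      ((LinearMap.ker (LinearMap.mulLeft k (Xel k m x) - LinearMap.mulRight k (Xel k m x))) ⊓
        (LinearMap.ker (Matrix.traceLinearMap (Fin 2) k
          (AdjoinRoot ((X : Polynomial k) ^ (m + 1))))) :
          Submodule k (Matrix (Fin 2) (Fin 2) (AdjoinRoot ((X : Polynomial k) ^ (m + 1))))) := by
  classical
  haveI : Module.Finite k (AdjoinRoot ((X : Polynomial k) ^ (m + 1))) :=
    Module.Finite.of_basis (bA k m)
  set A := AdjoinRoot ((X : Polynomial k) ^ (m + 1)) with hA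
  set al := algebraMap k A with hal
  have htwo : (2 : k) ≠ 0 := by
    have h2 : ((2 : ℕ) : k) ≠ 0 := by
      rw [Ne, CharP.cast_eq_zero_iff k p]
      intro hdvd
      have := Nat.le_of_dvd (by norm_num) hdvd
      omega
    simpa using h2
  have htrx : ∀ j, Matrix.trace (x j) = 0 := fun j =>
    (Matrix.isNilpotent_trace_of_isNilpotent (hnil j)).eq_zero
  set w : Fin 3 → Matrix (Fin 2) (Fin 2) k :=
    ![Matrix.single 0 1 1, Matrix.single 1 0 1,
      Matrix.single 0 0 1 - Matrix.single 1 1 1] with hw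
  have htrw : ∀ l, Matrix.trace (w l) = 0 := by
    intro l
    fin_cases l <;>
      simp [hw, Matrix.trace_fin_two, Matrix.single]
  have hwent : ∀ l l' : Fin 3,
      w l' (![0, 1, 0] l) (![1, 0, 0] l) = if l' = l then 1 else 0 := by
    intro l l'
    fin_cases l <;> fin_cases l' <;>
      simp [hw, Matrix.single, Matrix.sub_apply]
  set S : Submodule k (Matrix (Fin 2) (Fin 2) A) :=
    (LinearMap.ker (LinearMap.mulLeft k (Xel k m x) - LinearMap.mulRight k (Xel k m x))) ⊓
      (LinearMap.ker (Matrix.traceLinearMap (Fin 2) k A)) with hS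
  set fam : (Fin 3 × Fin i) ⊕ (Fin (m - i + 1)) → Matrix (Fin 2) (Fin 2) A :=
    Sum.elim (fun la => (tA k m) ^ (m - (la.2 : ℕ)) • (w la.1).map al)
      (fun c => uEl k m i x (c : ℕ)) with hfam
  have hmem : ∀ idx, fam idx ∈ S := by
    rintro (⟨l, a⟩ | c) <;>
      rw [hfam, hS, Submodule.mem_inf, LinearMap.mem_ker, LinearMap.mem_ker]
    · constructor
      · rw [LinearMap.sub_apply, LinearMap.mulLeft_apply, LinearMap.mulRight_apply,
          sub_eq_zero, Sum.elim_inl]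
        exact comm_high x hlow (w l) (m - (a : ℕ)) (by have := a.2; omega)
      · rw [Sum.elim_inl, Matrix.traceLinearMap_apply]
        exact trace_tpow_smul _ _ (htrw l)
    · constructor
      · rw [LinearMap.sub_apply, LinearMap.mulLeft_apply, LinearMap.mulRight_apply,
          sub_eq_zero, Sum.elim_inr]
        exact comm_u htwo x hlow (c : ℕ)
      · rw [Sum.elim_inr, Matrix.traceLinearMap_apply, uEl, Matrix.trace_sum]
        exact Finset.sum_eq_zero fun j _ => trace_tpow_smul _ _ (htrx j)
  have hind : LinearIndependent k fam := by
    rw [Fintype.linearIndependent_iff]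
    intro g hg
    obtain ⟨r₀, s₀, hrs⟩ : ∃ r s, x ⟨i, Nat.lt_succ_of_le hi⟩ r s ≠ 0 := by
      by_contra h
      push_neg at h
      exact hxi (by ext r s; simpa using h r s)
    have hsum : ∀ (r s : Fin 2) (e : Fin (m+1)),
        (∑ la : Fin 3 × Fin i, g (Sum.inl la) *
          phi k m r s e ((tA k m) ^ (m - (la.2 : ℕ)) • (w la.1).map al)) +
        (∑ c : Fin (m - i + 1), g (Sum.inr c) * phi k m r s e (uEl k m i x (c : ℕ))) = 0 := by
      intro r s e
      have h1 := congrArg (phi k m r s e) hg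
      rw [map_sum, map_zero, Fintype.sum_sum_type] at h1
      simpa [hfam, map_smul, smul_eq_mul] using h1
    have hbeta : ∀ n (hn : n < m - i + 1), g (Sum.inr ⟨n, hn⟩) = 0 := by
      intro n
      induction n using Nat.strong_induction_on with
      | _ n IH =>
        intro hn
        have hn' : n ≤ m - i := by omega
        have h0 := hsum r₀ s₀ ⟨n, by omega⟩
        have hA1 : (∑ la : Fin 3 × Fin i, g (Sum.inl la) *
            phi k m r₀ s₀ ⟨n, by omega⟩ ((tA k m) ^ (m - (la.2 : ℕ)) • (w la.1).map al)) = 0 := by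
          refine Finset.sum_eq_zero fun la _ => ?_
          rw [phi_tpow_smul_t, if_neg (by have := la.2.2; simp only [Fin.val_mk]; omega), mul_zero]
        rw [hA1, zero_add] at h0
        rw [Finset.sum_eq_single (⟨n, hn⟩ : Fin (m - i + 1))] at h0
        · rw [heval_u_low x hlow r₀ s₀ ⟨n, by omega⟩ (by simpa using hn') n (by simp)
            ⟨i, Nat.lt_succ_of_le hi⟩ (by simp)] at h0
          exact (mul_eq_zero.mp h0).resolve_right hrs
        · intro c _ hc
          rcases lt_trichotomy (c : ℕ) n with hlt | heq | hgt
          · rw [show c = ⟨(c : ℕ), c.2⟩ from rfl, IH (c : ℕ) hlt c.2, zero_mul]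
          · exact absurd (Fin.ext heq) hc
          · rw [heval_u_high x hlow r₀ s₀ ⟨n, by omega⟩ (c : ℕ) (by simpa using hgt), mul_zero]
        · intro h; exact absurd (Finset.mem_univ _) h
    have halpha : ∀ (l : Fin 3) (a : Fin i), g (Sum.inl (l, a)) = 0 := by
      intro l a₀
      have h0 := hsum (![0, 1, 0] l) (![1, 0, 0] l) ⟨m - (a₀ : ℕ), by omega⟩
      have hB : (∑ c : Fin (m - i + 1), g (Sum.inr c) *
          phi k m (![0, 1, 0] l) (![1, 0, 0] l) ⟨m - (a₀ : ℕ), by omega⟩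
            (uEl k m i x (c : ℕ))) = 0 := by
        refine Finset.sum_eq_zero fun c _ => ?_
        have := hbeta (c : ℕ) c.2
        rw [show (⟨(c : ℕ), c.2⟩ : Fin (m - i + 1)) = c from rfl] at this
        rw [this, zero_mul]
      rw [hB, add_zero] at h0
      rw [Finset.sum_eq_single ((l, a₀) : Fin 3 × Fin i)] at h0
      · rw [phi_tpow_smul_t, if_pos rfl, hwent l l, if_pos rfl, mul_one] at h0
        exact h0
      · rintro ⟨l', a⟩ _ hne
        rw [phi_tpow_smul_t]
        by_cases ha : a = a₀
        · subst ha
          have hl : l' ≠ l := fun h => hne (by rw [h])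
          rw [if_pos rfl, hwent l l', if_neg hl, mul_zero]
        · rw [if_neg, mul_zero]
          have h1 := a.2
          have h2 := a₀.2
          simp only [Fin.val_mk]
          intro hcon
          exact ha (Fin.ext (by omega))
      · intro h; exact absurd (Finset.mem_univ _) h
    rintro (⟨l, a⟩ | c)
    · exact halpha l a
    · rw [show c = ⟨(c : ℕ), c.2⟩ from rfl]
      exact hbeta (c : ℕ) c.2
  have hcard : Fintype.card ((Fin 3 × Fin i) ⊕ (Fin (m - i + 1))) = 2 * i + m + 1 := by
    simp [Fintype.card_sum, Fintype.card_prod]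
    omega
  set fam' : (Fin 3 × Fin i) ⊕ (Fin (m - i + 1)) → S := fun idx => ⟨fam idx, hmem idx⟩
    with hfam'
  have hind' : LinearIndependent k fam' :=
    LinearIndependent.of_comp S.subtype (by exact hind)
  calc 2 * i + m + 1 = Fintype.card ((Fin 3 × Fin i) ⊕ (Fin (m - i + 1))) := hcard.symm
    _ ≤ Module.finrank k S := hind'.fintype_card_le_finrank

end Main

end SL2Aux

/-- For `x = Σ_{j=i}^m x_j t^j ∈ (sl_2)_m` with all `x_j` nilpotent and
`x_i ≠ 0` (char `k = p > 2`), the centraliser of `x` in `(sl_2)_m` (trace-zero matrices over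
`k[t]/(t^{m+1})` commuting with `x`) has `k`-dimension at least `2i + m + 1`. -/



theorem sl2_truncated_centralizer_dim_bound
    (p : ℕ) (hp : p.Prime) (hp2 : 2 < p) (k : Type*) [Field k] [IsAlgClosed k] [CharP k p]
    (m i : ℕ) (hi : i ≤ m)
    (x : Fin (m + 1) → Matrix (Fin 2) (Fin 2) k)
    (hnil : ∀ j, IsNilpotent (x j))
    (hlow : ∀ j : Fin (m + 1), (j : ℕ) < i → x j = 0)
    (hxi : x ⟨i, Nat.lt_succ_of_le hi⟩ ≠ 0) :
    letI A := AdjoinRoot ((X : Polynomial k) ^ (m + 1))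
    letI t : A := AdjoinRoot.root _
    letI X : Matrix (Fin 2) (Fin 2) A :=
      ∑ j : Fin (m + 1), (t ^ (j : ℕ)) • (x j).map (algebraMap k A)
    2 * i + m + 1 ≤ Module.finrank k
      ((LinearMap.ker (LinearMap.mulLeft k X - LinearMap.mulRight k X)) ⊓
        (LinearMap.ker (Matrix.traceLinearMap (Fin 2) k A)) :
          Submodule k (Matrix (Fin 2) (Fin 2) A)) := by
  exact SL2Aux.main p hp hp2 k m i hi x hnil hlow hxi
end
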